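/- For the Lorenz matrix L = [[−σ,σ,0],[ρ,−1,0],[0,0,−β]] with σ, ρ, β > 0 and any f ∈ ℝ³, det[f, Lf, L²f] = (1/2)·𝔰·(fᵀe₃)(fᵀHf), where 𝔰 = β² − (σ+1)β + σ(1−ρ), e₃ = (0,0,1)ᵀ, and H is the Hessian of the quadratic form ρx² − σy² + (σ−1)xy, i.e., fᵀHf = 2ρf₁² − 2σf₂² + 2(σ−1)f₁f₂. -/
import Mathlib


open Matrix

/-- Lorenz determinant identity: for L = [[−σ,σ,0],[ρ,−1,0],[0,0,−β]],
det[f, Lf, L²f] = (1/2)·𝔰·(fᵀe₃)(fᵀHf), where 𝔰 = β² − (σ+1)β + σ(1−ρ)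
and fᵀHf = 2ρf₁² − 2σf₂² + 2(σ−1)f₁f₂. -/
theorem lorenz_det_identity (σ ρ β : ℝ) (hσ : 0 < σ) (hρ : 0 < ρ) (hβ : 0 < β)
    (f : Fin 3 → ℝ)
    (L : Matrix (Fin 3) (Fin 3) ℝ)
    (hL : L = !![-σ, σ, 0; ρ, -1, 0; 0, 0, -β]) :
    (Matrix.of ![f, L.mulVec f, L.mulVec (L.mulVec f)]).transpose.det =
      (1 / 2 : ℝ) * (β ^ 2 - (σ + 1) * β + σ * (1 - ρ)) * (f 2) *
        (2 * ρ * f 0 ^ 2 - 2 * σ * f 1 ^ 2 + 2 * (σ - 1) * f 0 * f 1) := by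
  subst hL
  rw [Matrix.det_transpose, Matrix.det_fin_three]
  simp [Matrix.mulVec, dotProduct, Fin.sum_univ_three]
  ring
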